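/- Domain propagation preserves the feasible set: if F denotes the set of points satisfying all affine constraints l ≤ D u ≤ u_b and the initial box bounds, then after any number of iterations of the bound strengthening updates, F ⊆ Π_i [lo_i^{(t)}, hi_i^{(t)}]; i.e., no feasible point is ever cut off by the strengthened box. -/
import Mathlib


open Finset

/-- Propagated upper value `ū_{b,i}` for row `r` of `l ≤ D u ≤ ub`. -/
noncomputable def ubarDP {m n : ℕ} (D : Matrix (Fin m) (Fin n) ℝ)
    (ub : Fin m → ℝ) (r : Fin m) (i : Fin n) (lo hi : Fin n → ℝ) : ℝ :=
  ub r - ∑ j ∈ univ.filter (fun j => j ≠ i ∧ 0 < D r j), D r j * lo j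
       - ∑ j ∈ univ.filter (fun j => j ≠ i ∧ D r j < 0), D r j * hi j

/-- Propagated lower value `l̄_{b,i}` for row `r` of `l ≤ D u ≤ ub`. -/
noncomputable def lbarDP {m n : ℕ} (D : Matrix (Fin m) (Fin n) ℝ)
    (l : Fin m → ℝ) (r : Fin m) (i : Fin n) (lo hi : Fin n → ℝ) : ℝ :=
  l r - ∑ j ∈ univ.filter (fun j => j ≠ i ∧ 0 < D r j), D r j * hi j
      - ∑ j ∈ univ.filter (fun j => j ≠ i ∧ D r j < 0), D r j * lo j

/-- One step of the domain propagation algorithm: a row `r` and a variable `i`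
with `D r i ≠ 0` are chosen and the bounds of `u_i` are strengthened using the
propagated values computed from the current box. -/
noncomputable def dpStep {m n : ℕ} (D : Matrix (Fin m) (Fin n) ℝ)
    (l ub : Fin m → ℝ) (lo hi lo' hi' : Fin n → ℝ) : Prop :=
  ∃ r i, D r i ≠ 0 ∧
    if 0 < D r i then
      lo' = Function.update lo i (max (lo i) (lbarDP D l r i lo hi / D r i)) ∧
      hi' = Function.update hi i (min (hi i) (ubarDP D ub r i lo hi / D r i))
    else
      lo' = Function.update lo i (max (lo i) (ubarDP D ub r i lo hi / D r i)) ∧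
      hi' = Function.update hi i (min (hi i) (lbarDP D l r i lo hi / D r i))

lemma sum_split_aux {m n : ℕ} (D : Matrix (Fin m) (Fin n) ℝ) (r : Fin m)
    (i : Fin n) (f g : Fin n → ℝ) :
    ∑ j ∈ univ.filter (fun j => j ≠ i ∧ 0 < D r j), D r j * f j
      + ∑ j ∈ univ.filter (fun j => j ≠ i ∧ D r j < 0), D r j * g j
    = ∑ j ∈ univ.erase i,
        (if 0 < D r j then D r j * f j else if D r j < 0 then D r j * g j else 0) := by
  rw [Finset.sum_filter, Finset.sum_filter, ← Finset.sum_add_distrib,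
    ← Finset.filter_ne', Finset.sum_filter]
  refine Finset.sum_congr rfl fun j _ => ?_
  by_cases h1 : j = i <;> by_cases h2 : 0 < D r j <;> by_cases h3 : D r j < 0 <;>
    simp [h1, h2, h3] <;> linarith

lemma key_bound {m n : ℕ} (D : Matrix (Fin m) (Fin n) ℝ) (l ub : Fin m → ℝ)
    (lo hi : Fin n → ℝ) (x : Fin n → ℝ) (r : Fin m)
    (hc : l r ≤ ∑ j, D r j * x j ∧ ∑ j, D r j * x j ≤ ub r)
    (hbox : ∀ i, lo i ≤ x i ∧ x i ≤ hi i) (i : Fin n) :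
    lbarDP D l r i lo hi ≤ D r i * x i ∧ D r i * x i ≤ ubarDP D ub r i lo hi := by
  have hsum : ∑ j, D r j * x j = D r i * x i + ∑ j ∈ univ.erase i, D r j * x j :=
    (Finset.add_sum_erase univ (fun j => D r j * x j) (mem_univ i)).symm
  have hlow : ∑ j ∈ univ.erase i,
      (if 0 < D r j then D r j * lo j else if D r j < 0 then D r j * hi j else 0)
      ≤ ∑ j ∈ univ.erase i, D r j * x j := by
    refine Finset.sum_le_sum fun j _ => ?_
    split_ifs with h1 h2
    · exact mul_le_mul_of_nonneg_left (hbox j).1 h1.le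
    · exact mul_le_mul_of_nonpos_left (hbox j).2 h2.le
    · have : D r j = 0 := le_antisymm (not_lt.1 h1) (not_lt.1 h2)
      simp [this]
  have hhigh : ∑ j ∈ univ.erase i, D r j * x j ≤ ∑ j ∈ univ.erase i,
      (if 0 < D r j then D r j * hi j else if D r j < 0 then D r j * lo j else 0) := by
    refine Finset.sum_le_sum fun j _ => ?_
    split_ifs with h1 h2
    · exact mul_le_mul_of_nonneg_left (hbox j).2 h1.le
    · exact mul_le_mul_of_nonpos_left (hbox j).1 h2.le
    · have : D r j = 0 := le_antisymm (not_lt.1 h1) (not_lt.1 h2)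
      simp [this]
  constructor
  · rw [lbarDP]
    have := sum_split_aux D r i hi lo
    have h1 := hc.1
    rw [hsum] at h1
    linarith
  · rw [ubarDP]
    have := sum_split_aux D r i lo hi
    have h2 := hc.2
    rw [hsum] at h2
    linarith

/-- Domain propagation never cuts off a feasible point: every point satisfying
the affine constraints `l ≤ D u ≤ ub` and the initial box bounds lies in the
box obtained after any number of bound-strengthening iterations. -/
theorem stmt_18 (m n : ℕ) (D : Matrix (Fin m) (Fin n) ℝ) (l ub : Fin m → ℝ)
    (lo hi : ℕ → Fin n → ℝ)
    (hstep : ∀ t, dpStep D l ub (lo t) (hi t) (lo (t + 1)) (hi (t + 1))) :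
    ∀ x : Fin n → ℝ,
      (∀ r, l r ≤ ∑ j, D r j * x j ∧ ∑ j, D r j * x j ≤ ub r) →
      (∀ i, lo 0 i ≤ x i ∧ x i ≤ hi 0 i) →
      ∀ t i, lo t i ≤ x i ∧ x i ≤ hi t i := by
  intro x hc h0 t
  induction t with
  | zero => exact h0
  | succ t ih =>
    obtain ⟨r, i, hne, hcase⟩ := hstep t
    have hkey := key_bound D l ub (lo t) (hi t) x r (hc r) ih i
    intro k
    by_cases hpos : 0 < D r i
    · rw [if_pos hpos] at hcase
      obtain ⟨hl, hh⟩ := hcase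
      rw [hl, hh]
      by_cases hk : k = i
      · subst hk
        simp only [Function.update_self]
        refine ⟨max_le (ih k).1 ?_, le_min (ih k).2 ?_⟩
        · rw [div_le_iff₀ hpos]; nlinarith [hkey.1]
        · rw [le_div_iff₀ hpos]; nlinarith [hkey.2]
      · simp only [Function.update_of_ne hk]; exact ih k
    · have hneg : D r i < 0 := lt_of_le_of_ne (not_lt.1 hpos) hne
      rw [if_neg hpos] at hcase
      obtain ⟨hl, hh⟩ := hcase
      rw [hl, hh]
      by_cases hk : k = i
      · subst hk
        simp only [Function.update_self]
        refine ⟨max_le (ih k).1 ?_, le_min (ih k).2 ?_⟩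
        · rw [div_le_iff_of_neg hneg]; nlinarith [hkey.2]
        · rw [le_div_iff_of_neg hneg]; nlinarith [hkey.1]
      · simp only [Function.update_of_ne hk]; exact ih k
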